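/- For t > -1 and positive integers m, k, and any measurable φ:(0,1)→[0,∞), one has ℱ^{(t)}_{m+k}(M_{φ₁} 𝒢^{(t)}_m φ)(0) = (1/k) ℱ^{(t)}_{m+k}φ(0), where both sides may be +∞. -/

import Mathlib

open MeasureTheory ENNReal

/-- `ℱ^{(t)}_m φ(s) = ∫_s^1 r^{m-1} φ(r)(1-r)^t dr`, as a Lebesgue integral with values
in `[0,∞]`. -/
noncomputable def Fop (t : ℝ) (m : ℕ) (φ : ℝ → ℝ≥0∞) (s : ℝ) : ℝ≥0∞ :=
  ∫⁻ r in Set.Ioo s 1, ENNReal.ofReal (r ^ (m - 1) * (1 - r) ^ t) * φ r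

/-- `𝒢^{(t)}_m φ(s) = ℱ^{(t)}_m φ(s) / (s^m (1-s)^{t+1})`. -/
noncomputable def Gop (t : ℝ) (m : ℕ) (φ : ℝ → ℝ≥0∞) (s : ℝ) : ℝ≥0∞ :=
  Fop t m φ s / ENNReal.ofReal (s ^ m * (1 - s) ^ (t + 1))

theorem stmt_13 (t : ℝ) (ht : -1 < t) (m k : ℕ) (hm : 0 < m) (hk : 0 < k)
    (φ : ℝ → ℝ≥0∞) (hφ : Measurable φ) :
    Fop t (m + k) (fun s => ENNReal.ofReal (1 - s) * Gop t m φ s) 0 =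
      Fop t (m + k) φ 0 / (k : ℝ≥0∞) := by
  set f : ℝ → ℝ≥0∞ := fun s => ENNReal.ofReal (s ^ (k - 1)) with hfdef
  set g : ℝ → ℝ≥0∞ := fun r => ENNReal.ofReal (r ^ (m - 1) * (1 - r) ^ t) * φ r with hgdef
  have hfm : Measurable f := by fun_prop
  have hgm : Measurable g := by fun_prop
  -- Step 1 : simplify the integrand
  have step1 : Fop t (m + k) (fun s => ENNReal.ofReal (1 - s) * Gop t m φ s) 0
      = ∫⁻ s in Set.Ioo (0:ℝ) 1, f s * Fop t m φ s := by
    rw [show Fop t (m + k) (fun s => ENNReal.ofReal (1 - s) * Gop t m φ s) 0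
      = ∫⁻ s in Set.Ioo (0:ℝ) 1, ENNReal.ofReal (s ^ (m + k - 1) * (1 - s) ^ t) *
        (ENNReal.ofReal (1 - s) * Gop t m φ s) from rfl]
    refine setLIntegral_congr_fun measurableSet_Ioo ?_
    intro s hs
    beta_reduce
    obtain ⟨hs0, hs1⟩ := hs
    have h1s : (0:ℝ) < 1 - s := by linarith
    have hb : (0:ℝ) < s ^ m * (1 - s) ^ (t + 1) :=
      mul_pos (pow_pos hs0 m) (Real.rpow_pos_of_pos h1s _)
    have key : ENNReal.ofReal (s ^ (m + k - 1) * (1 - s) ^ t) * ENNReal.ofReal (1 - s)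
        = f s * ENNReal.ofReal (s ^ m * (1 - s) ^ (t + 1)) := by
      rw [hfdef, ← ENNReal.ofReal_mul (by positivity), ← ENNReal.ofReal_mul (by positivity)]
      congr 1
      rw [Real.rpow_add_one h1s.ne', show m + k - 1 = (k - 1) + m by omega, pow_add]
      ring
    rw [Gop, ← mul_assoc, key, mul_assoc,
      ENNReal.mul_div_cancel' (fun h => absurd h (by simpa using hb))
        (fun h => absurd h ENNReal.ofReal_ne_top)]
  -- the inner elementary integral
  have inner : ∀ r : ℝ, 0 < r → (∫⁻ s in Set.Ioo (0:ℝ) r, f s) = ENNReal.ofReal (r ^ k / k) := by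
    intro r hr
    have hint : IntegrableOn (fun s : ℝ => s ^ (k - 1)) (Set.Ioo 0 r) :=
      ((continuous_pow (k - 1)).integrableOn_Ioc).mono_set Set.Ioo_subset_Ioc_self
    rw [hfdef, ← ofReal_integral_eq_lintegral_ofReal hint
      (ae_restrict_of_forall_mem measurableSet_Ioo fun s hs => (pow_nonneg hs.1.le _))]
    congr 1
    rw [← MeasureTheory.integral_Ioc_eq_integral_Ioo,
      ← intervalIntegral.integral_of_le hr.le, integral_pow]
    have h2 : ((k - 1 : ℕ) : ℝ) + 1 = (k : ℝ) := by
      exact_mod_cast congrArg (Nat.cast : ℕ → ℝ) (by omega : (k - 1 : ℕ) + 1 = k)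
    rw [show (k - 1 : ℕ) + 1 = k by omega, h2]
    simp [zero_pow hk.ne']
  -- the kernel function on the product space
  set H : ℝ × ℝ → ℝ≥0∞ :=
    fun p => Set.indicator {q : ℝ × ℝ | q.1 < q.2} (fun q => f q.1 * g q.2) p with hHdef
  have hH : Measurable H := by
    refine Measurable.indicator ?_ (measurableSet_lt measurable_fst measurable_snd)
    exact (hfm.comp measurable_fst).mul (hgm.comp measurable_snd)
  have step2 : (∫⁻ s in Set.Ioo (0:ℝ) 1, f s * Fop t m φ s)
      = ∫⁻ s in Set.Ioo (0:ℝ) 1, ∫⁻ r in Set.Ioo (0:ℝ) 1, H (s, r) := by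
    refine setLIntegral_congr_fun measurableSet_Ioo ?_
    intro s hs
    beta_reduce
    obtain ⟨hs0, hs1⟩ := hs
    have hind : (fun r => H (s, r)) = (Set.Ioi s).indicator (fun r => f s * g r) := by
      ext r
      simp [hHdef, Set.indicator_apply, Set.mem_Ioi]
    rw [Fop, ← hgdef, ← lintegral_const_mul (f s) hgm]
    have hset : Set.Ioi s ∩ Set.Ioo (0:ℝ) 1 = Set.Ioo s 1 :=
      Set.ext fun r => ⟨fun h => ⟨h.1, h.2.2⟩, fun h => ⟨h.1, hs0.trans h.1, h.2⟩⟩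
    rw [show (∫⁻ r in Set.Ioo (0:ℝ) 1, H (s, r)) =
        ∫⁻ r in Set.Ioo (0:ℝ) 1, (Set.Ioi s).indicator (fun r => f s * g r) r by
      rw [hind],
      lintegral_indicator measurableSet_Ioi,
      Measure.restrict_restrict measurableSet_Ioi, hset]
  have step3 : (∫⁻ s in Set.Ioo (0:ℝ) 1, ∫⁻ r in Set.Ioo (0:ℝ) 1, H (s, r))
      = ∫⁻ r in Set.Ioo (0:ℝ) 1, ENNReal.ofReal (r ^ k / k) * g r := by
    rw [lintegral_lintegral_swap hH.aemeasurable]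
    refine setLIntegral_congr_fun measurableSet_Ioo ?_
    intro r hr
    beta_reduce
    obtain ⟨hr0, hr1⟩ := hr
    have hind : (fun s => H (s, r)) = (Set.Iio r).indicator (fun s => f s * g r) := by
      ext s
      simp [hHdef, Set.indicator_apply, Set.mem_Iio]
    have hset : Set.Iio r ∩ Set.Ioo (0:ℝ) 1 = Set.Ioo 0 r :=
      Set.ext fun s => ⟨fun h => ⟨h.2.1, h.1⟩, fun h => ⟨h.2, h.1, h.2.trans hr1⟩⟩
    rw [hind, lintegral_indicator measurableSet_Iio,
      Measure.restrict_restrict measurableSet_Iio, hset,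
      lintegral_mul_const _ hfm, inner r hr0]
  have step4 : (∫⁻ r in Set.Ioo (0:ℝ) 1, ENNReal.ofReal (r ^ k / k) * g r)
      = Fop t (m + k) φ 0 / (k : ℝ≥0∞) := by
    have hkR : (0:ℝ) < (k:ℝ) := by exact_mod_cast hk
    have hcongr : (∫⁻ r in Set.Ioo (0:ℝ) 1, ENNReal.ofReal (r ^ k / k) * g r)
        = ∫⁻ r in Set.Ioo (0:ℝ) 1,
            (ENNReal.ofReal (r ^ (m + k - 1) * (1 - r) ^ t) * φ r) * ((k : ℝ≥0∞))⁻¹ := by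
      refine setLIntegral_congr_fun measurableSet_Ioo ?_
      intro r hr
      beta_reduce
      obtain ⟨hr0, hr1⟩ := hr
      rw [ENNReal.ofReal_div_of_pos hkR, ENNReal.ofReal_natCast, div_eq_mul_inv, hgdef]
      rw [show ENNReal.ofReal (r ^ k) * ((k:ℝ≥0∞))⁻¹ *
            (ENNReal.ofReal (r ^ (m - 1) * (1 - r) ^ t) * φ r)
          = ENNReal.ofReal (r ^ k) * ENNReal.ofReal (r ^ (m - 1) * (1 - r) ^ t) * φ r
              * ((k:ℝ≥0∞))⁻¹ by ring]
      rw [← ENNReal.ofReal_mul (pow_nonneg hr0.le _)]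
      congr 2
      rw [show m + k - 1 = k + (m - 1) by omega, pow_add]
      ring
    rw [hcongr, lintegral_mul_const'' _ ((by fun_prop : Measurable
        (fun r : ℝ => ENNReal.ofReal (r ^ (m + k - 1) * (1 - r) ^ t) * φ r)).aemeasurable.restrict),
      Fop, ENNReal.div_eq_inv_mul, mul_comm]
  rw [step1, step2, step3, step4]
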